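/- arXiv:1607.07748 — 2 statements merged into one kernel-verified Lean document; each statement's English description precedes it below -/
import Mathlib

section
/- Let X be a connected graph with basepoint x₀. The map sending a pair (f, ⟦β⟧), where f ∈ Aut(X) and β: x₀ → f(x₀) is a path, to the automorphism of X̄ that maps each atom ⟦α⟧: x₀ → x to the atom ⟦β f(α)⟧: x₀ → f(x) and each edge (⟦α⟧, e) to the edge (⟦β f(α)⟧, f(e)), is a bijection from the set of such pairs onto Cov(X). -/
/-- A graph in the sense of Sunada's topological crystallography: a set of vertices,
a set of edges, source and target maps, and a fixed-point free involution sending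
each edge to its inverse. -/
structure SGraph where
  V : Type
  E : Type
  s : E → V
  t : E → V
  inv : E → E
  s_inv : ∀ e, s (inv e) = t e
  t_inv : ∀ e, t (inv e) = s e
  inv_inv : ∀ e, inv (inv e) = e
  inv_ne : ∀ e, inv e ≠ e

namespace SGraph

variable (X : SGraph)

/-- `X.IsPath x y γ` : the word of edges `γ` is a path from `x` to `y` in `X`. -/
inductive IsPath : X.V → X.V → List X.E → Prop
  | nil (x : X.V) : IsPath x x []
  | cons (e : X.E) {y : X.V} {γ : List X.E} (h : IsPath (X.t e) y γ) :
      IsPath (X.s e) y (e :: γ)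

/-- A graph is connected if any two vertices are joined by a path. -/
def Connected : Prop := ∀ x y : X.V, ∃ γ : List X.E, X.IsPath x y γ

/-- An edge is a bridge if there is no path from its target to its source
avoiding both the edge and its inverse. -/
def IsBridge (e : X.E) : Prop :=
  ¬ ∃ γ : List X.E, X.IsPath (X.t e) (X.s e) γ ∧ e ∉ γ ∧ X.inv e ∉ γ

/-- The space `C₁(X,ℝ)` of real 1-chains: formal linear combinations of edges
with `e⁻¹ = -e`, realized as finitely supported functions `c : E → ℝ` with
`c(e⁻¹) = - c(e)`. -/
noncomputable def C1 : Submodule ℝ (X.E →₀ ℝ) where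
  carrier := {c | ∀ e, c (X.inv e) = - c e}
  add_mem' := by
    intro a b ha hb e
    simp only [Finsupp.add_apply, ha e, hb e]
    ring
  zero_mem' := by intro e; simp
  smul_mem' := by
    intro r c hc e
    simp only [Finsupp.smul_apply, hc e, smul_eq_mul]
    ring

/-- The 1-chain associated to a single edge. -/
noncomputable def edgeChain (e : X.E) : ↥X.C1 :=
  ⟨Finsupp.single e 1 - Finsupp.single (X.inv e) 1, by
    intro f
    classical
    have h1 : (e = X.inv f) ↔ (X.inv e = f) := by
      constructor
      · rintro rfl; exact X.inv_inv f
      · rintro rfl; exact (X.inv_inv e).symm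
    have h2 : (X.inv e = X.inv f) ↔ (e = f) := by
      constructor
      · intro h
        have := congrArg X.inv h
        rwa [X.inv_inv, X.inv_inv] at this
      · rintro rfl; rfl
    simp only [Finsupp.sub_apply, Finsupp.single_apply, h1, h2]
    ring⟩

/-- The 1-chain `c_γ` of a path `γ`. -/
noncomputable def pathChain (γ : List X.E) : ↥X.C1 := (γ.map X.edgeChain).sum

/-- The inner product on `C₁(X,ℝ)` for which the edges form an orthonormal basis
(with `e⁻¹` counting as the negative of `e`). -/
noncomputable def chainInner (c d : ↥X.C1) : ℝ :=
  (1/2) * ((c : X.E →₀ ℝ).sum fun e x => x * (d : X.E →₀ ℝ) e)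

/-- The boundary of a 1-chain. -/
noncomputable def boundary (c : ↥X.C1) : X.V →₀ ℝ :=
  (c : X.E →₀ ℝ).sum fun e x => x • (Finsupp.single (X.t e) (1:ℝ) - Finsupp.single (X.s e) 1)

/-- A 1-cycle is a 1-chain with vanishing boundary. -/
def IsCycle (c : ↥X.C1) : Prop := X.boundary c = 0

/-- An integral 1-chain: all coefficients are integers. -/
def IsIntegral (c : ↥X.C1) : Prop := ∀ e, ∃ n : ℤ, (c : X.E →₀ ℝ) e = (n : ℝ)

/-- The support of a 1-chain: the set of edges with positive coefficient. -/
def chainSupp (c : ↥X.C1) : Set X.E := {e | 0 < (c : X.E →₀ ℝ) e}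

/-- `p` is the orthogonal projection of `C₁(X,ℝ)` onto the space `Z₁(X,ℝ)` of 1-cycles:
it takes values in `Z₁(X,ℝ)` and `c - p c` is orthogonal to every 1-cycle. -/
def IsOrthoProj (p : ↥X.C1 → ↥X.C1) : Prop :=
  (∀ c, X.IsCycle (p c)) ∧ (∀ c z, X.IsCycle z → X.chainInner (c - p c) z = 0)

/-- Two paths from `x` to `y` are homologous if one can be obtained from the other
by repeatedly inserting or deleting subwords `e e⁻¹`, and/or replacing a subword
`στ` by `τσ` where `σ` and `τ` are loops based at the same vertex. -/
inductive Homologous : X.V → X.V → List X.E → List X.E → Prop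
  | refl {x y : X.V} (γ : List X.E) (h : X.IsPath x y γ) : Homologous x y γ γ
  | cancel {x y : X.V} (γ δ : List X.E) (e : X.E)
      (h : X.IsPath x y (γ ++ e :: X.inv e :: δ)) (h' : X.IsPath x y (γ ++ δ)) :
      Homologous x y (γ ++ e :: X.inv e :: δ) (γ ++ δ)
  | swap {x y : X.V} (γ σ τ δ : List X.E) (v : X.V)
      (hσ : X.IsPath v v σ) (hτ : X.IsPath v v τ)
      (h : X.IsPath x y (γ ++ (σ ++ (τ ++ δ))))
      (h' : X.IsPath x y (γ ++ (τ ++ (σ ++ δ)))) :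
      Homologous x y (γ ++ (σ ++ (τ ++ δ))) (γ ++ (τ ++ (σ ++ δ)))
  | symm {x y : X.V} {a b : List X.E} (h : Homologous x y a b) : Homologous x y b a
  | trans {x y : X.V} {a b c : List X.E} (h1 : Homologous x y a b)
      (h2 : Homologous x y b c) : Homologous x y a c

/-- A simple path: no vertex is visited twice. -/
def IsSimplePath (x y : X.V) (γ : List X.E) : Prop :=
  X.IsPath x y γ ∧ (x :: γ.map X.t).Nodup

/-- A simple loop based at `x`: a loop in which every vertex other than `x` occurs
at most once and `x` occurs only as the initial and final vertex. -/
def IsSimpleLoop (x : X.V) (γ : List X.E) : Prop :=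
  X.IsPath x x γ ∧ (x :: (γ.map X.t).dropLast).Nodup

/-- A reduced word: no subword of the form `e e⁻¹`. -/
def Reduced (γ : List X.E) : Prop := γ.Chain' (fun a b => b ≠ X.inv a)

/-- A spanning tree: a set of edges, closed under inversion, such that the spanning
subgraph it determines is connected and has no nonempty reduced loops. -/
def IsSpanningTree (S : Set X.E) : Prop :=
  (∀ e ∈ S, X.inv e ∈ S) ∧
  (∀ x y : X.V, ∃ γ : List X.E, X.IsPath x y γ ∧ ∀ e ∈ γ, e ∈ S) ∧
  (∀ (x : X.V) (γ : List X.E), X.IsPath x x γ → (∀ e ∈ γ, e ∈ S) → X.Reduced γ → γ = [])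

/-- The quotient of a set of 1-chains by the translation action of the
integral 1-cycles. -/
def transQuot (S : Set ↥X.C1) : Type :=
  Quot (fun a b : S => ∃ z : ↥X.C1, X.IsCycle z ∧ X.IsIntegral z ∧ (b : ↥X.C1) = (a : ↥X.C1) + z)

end SGraph
namespace SGraph

section Lemmas

variable {X : SGraph}

/-- Concatenation of paths. -/
theorem IsPath.append {x y z : X.V} {γ δ : List X.E}
    (h1 : X.IsPath x y γ) : X.IsPath y z δ → X.IsPath x z (γ ++ δ) := by
  induction h1 with
  | nil _ => intro h2; simpa using h2
  | cons e h ih => intro h2; exact .cons e (ih h2)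

theorem isPath_single (X : SGraph) (e : X.E) : X.IsPath (X.s e) (X.t e) [e] :=
  .cons e (.nil _)

theorem isPath_single' (X : SGraph) (e : X.E) : X.IsPath (X.t e) (X.s e) [X.inv e] := by
  have := X.isPath_single (X.inv e)
  rwa [X.s_inv, X.t_inv] at this

/-- The endpoint of a path starting at `x`. -/
def endFrom (X : SGraph) (x : X.V) (γ : List X.E) : X.V := γ.foldl (fun _ e => X.t e) x

theorem IsPath.endFrom_eq {x y : X.V} {γ : List X.E} (h : X.IsPath x y γ) :
    X.endFrom x γ = y := by
  induction h with
  | nil x => rfl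
  | cons e h ih => exact ih

/-- Homologous paths are paths with the same endpoints. -/
theorem Homologous.isPath {x y : X.V} {a b : List X.E} (h : X.Homologous x y a b) :
    X.IsPath x y a ∧ X.IsPath x y b := by
  induction h with
  | refl γ h => exact ⟨h, h⟩
  | cancel γ δ e h h' => exact ⟨h, h'⟩
  | swap γ σ τ δ v hσ hτ h h' => exact ⟨h, h'⟩
  | symm h ih => exact ⟨ih.2, ih.1⟩
  | trans h1 h2 ih1 ih2 => exact ⟨ih1.1, ih2.2⟩

/-- Appending a fixed path preserves homology. -/
theorem Homologous.append_right {x y z : X.V} {a b c : List X.E}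
    (h : X.Homologous x y a b) (hc : X.IsPath y z c) :
    X.Homologous x z (a ++ c) (b ++ c) := by
  induction h with
  | refl γ hγ => exact .refl _ (hγ.append hc)
  | cancel γ δ e h h' =>
      have h1 : X.IsPath x z (γ ++ e :: X.inv e :: (δ ++ c)) := by
        have := h.append hc; simpa using this
      have h2 : X.IsPath x z (γ ++ (δ ++ c)) := by
        have := h'.append hc; simpa using this
      have := Homologous.cancel γ (δ ++ c) e h1 h2
      simpa using this
  | swap γ σ τ δ v hσ hτ h h' =>
      have h1 : X.IsPath x z (γ ++ (σ ++ (τ ++ (δ ++ c)))) := by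
        have := h.append hc; simpa using this
      have h2 : X.IsPath x z (γ ++ (τ ++ (σ ++ (δ ++ c)))) := by
        have := h'.append hc; simpa using this
      have := Homologous.swap γ σ τ (δ ++ c) v hσ hτ h1 h2
      simpa using this
  | symm h ih => exact ih.symm
  | trans h1 h2 ih1 ih2 => exact ih1.trans ih2

/-- Prepending a fixed path preserves homology. -/
theorem Homologous.prepend_left {w x y : X.V} {a b c : List X.E}
    (hc : X.IsPath w x c) (h : X.Homologous x y a b) :
    X.Homologous w y (c ++ a) (c ++ b) := by
  induction h with
  | refl γ hγ => exact .refl _ (hc.append hγ)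
  | cancel γ δ e h h' =>
      have h1 : X.IsPath w y ((c ++ γ) ++ e :: X.inv e :: δ) := by
        have := hc.append h; simpa using this
      have h2 : X.IsPath w y ((c ++ γ) ++ δ) := by
        have := hc.append h'; simpa using this
      have := Homologous.cancel (c ++ γ) δ e h1 h2
      simpa using this
  | swap γ σ τ δ v hσ hτ h h' =>
      have h1 : X.IsPath w y ((c ++ γ) ++ (σ ++ (τ ++ δ))) := by
        have := hc.append h; simpa using this
      have h2 : X.IsPath w y ((c ++ γ) ++ (τ ++ (σ ++ δ))) := by
        have := hc.append h'; simpa using this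
      have := Homologous.swap (c ++ γ) σ τ δ v hσ hτ h1 h2
      simpa using this
  | symm h ih => exact ih.symm
  | trans h1 h2 ih1 ih2 => exact ih1.trans ih2

/-- The reverse of a word of edges: reverse the order and invert each edge. -/
def revP (X : SGraph) (γ : List X.E) : List X.E := (γ.map X.inv).reverse

theorem IsPath.revP {x y : X.V} {γ : List X.E} (h : X.IsPath x y γ) :
    X.IsPath y x (X.revP γ) := by
  induction h with
  | nil x => exact .nil x
  | cons e h ih =>
      have := ih.append (X.isPath_single' e)
      simpa [SGraph.revP] using this

theorem Homologous.revP {x y : X.V} {a b : List X.E} (h : X.Homologous x y a b) :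
    X.Homologous y x (X.revP a) (X.revP b) := by
  induction h with
  | refl γ hγ => exact .refl _ hγ.revP
  | cancel γ δ e h h' =>
      have key : X.revP (γ ++ e :: X.inv e :: δ) = X.revP δ ++ e :: X.inv e :: X.revP γ := by
        simp [SGraph.revP, X.inv_inv]
      have key2 : X.revP (γ ++ δ) = X.revP δ ++ X.revP γ := by
        simp [SGraph.revP]
      have p1 : X.IsPath y x (X.revP δ ++ e :: X.inv e :: X.revP γ) := by
        have := h.revP; rwa [key] at this
      have p2 : X.IsPath y x (X.revP δ ++ X.revP γ) := by
        have := h'.revP; rwa [key2] at this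
      rw [key, key2]
      exact Homologous.cancel _ _ _ p1 p2
  | swap γ σ τ δ v hσ hτ h h' =>
      have key : X.revP (γ ++ (σ ++ (τ ++ δ)))
          = X.revP δ ++ (X.revP τ ++ (X.revP σ ++ X.revP γ)) := by
        simp [SGraph.revP]
      have key2 : X.revP (γ ++ (τ ++ (σ ++ δ)))
          = X.revP δ ++ (X.revP σ ++ (X.revP τ ++ X.revP γ)) := by
        simp [SGraph.revP]
      have p1 : X.IsPath y x (X.revP δ ++ (X.revP τ ++ (X.revP σ ++ X.revP γ))) := by
        have := h.revP; rwa [key] at this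
      have p2 : X.IsPath y x (X.revP δ ++ (X.revP σ ++ (X.revP τ ++ X.revP γ))) := by
        have := h'.revP; rwa [key2] at this
      rw [key, key2]
      exact Homologous.swap _ _ _ _ v hτ.revP hσ.revP p1 p2
  | symm h ih => exact ih.symm
  | trans h1 h2 ih1 ih2 => exact ih1.trans ih2

/-- `γ⁻¹ γ` is homologous to the trivial path. -/
theorem homologous_revP_append {x y : X.V} {γ : List X.E} (h : X.IsPath x y γ) :
    X.Homologous y y (X.revP γ ++ γ) [] := by
  induction h with
  | nil x => exact .refl [] (.nil x)
  | @cons e y' γ' h ih =>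
      have p0 : X.IsPath (X.t e) y' (X.inv e :: e :: γ') := by
        have tail : X.IsPath (X.t (X.inv e)) y' (e :: γ') := by
          rw [X.t_inv]; exact .cons e h
        have := IsPath.cons (X.inv e) tail
        rwa [X.s_inv] at this
      have p1 : X.IsPath y' y' (X.revP γ' ++ X.inv e :: e :: γ') := h.revP.append p0
      have p2 : X.IsPath y' y' (X.revP γ' ++ γ') := h.revP.append h
      have step : X.Homologous y' y' (X.revP γ' ++ X.inv e :: e :: γ') (X.revP γ' ++ γ') := by
        have := Homologous.cancel (X.revP γ') γ' (X.inv e)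
          (by rwa [X.inv_inv]) (by exact p2)
        rwa [X.inv_inv] at this
      have goal_eq : X.revP (e :: γ') ++ e :: γ' = X.revP γ' ++ X.inv e :: e :: γ' := by
        simp [SGraph.revP]
      rw [goal_eq]
      exact step.trans ih

end Lemmas

end SGraph
namespace SGraph

/-- A map of graphs. -/
structure Hom (X Y : SGraph) where
  vMap : X.V → Y.V
  eMap : X.E → Y.E
  map_s : ∀ e, Y.s (eMap e) = vMap (X.s e)
  map_t : ∀ e, Y.t (eMap e) = vMap (X.t e)
  map_inv : ∀ e, Y.inv (eMap e) = eMap (X.inv e)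

/-- Composition of maps of graphs. -/
def Hom.comp {X Y Z : SGraph} (f : Hom Y Z) (g : Hom X Y) : Hom X Z where
  vMap := fun v => f.vMap (g.vMap v)
  eMap := fun e => f.eMap (g.eMap e)
  map_s := fun e => by rw [f.map_s, g.map_s]
  map_t := fun e => by rw [f.map_t, g.map_t]
  map_inv := fun e => by rw [f.map_inv, g.map_inv]

/-- The identity map of graphs. -/
def Hom.idHom (X : SGraph) : Hom X X :=
  ⟨fun v => v, fun e => e, fun _ => rfl, fun _ => rfl, fun _ => rfl⟩

theorem IsPath.map {X Y : SGraph} {x y : X.V} {γ : List X.E}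
    (h : X.IsPath x y γ) (f : Hom X Y) :
    Y.IsPath (f.vMap x) (f.vMap y) (γ.map f.eMap) := by
  induction h with
  | nil x => exact .nil _
  | cons e h ih =>
      rw [← f.map_t] at ih
      have := IsPath.cons (f.eMap e) ih
      rwa [f.map_s] at this

/-- An automorphism of a graph. -/
structure Aut (X : SGraph) where
  toHom : Hom X X
  invHom : Hom X X
  left_inv : Hom.comp invHom toHom = Hom.idHom X
  right_inv : Hom.comp toHom invHom = Hom.idHom X

theorem Aut.ext' {X : SGraph} {f g : Aut X} (h : f.toHom = g.toHom) : f = g := by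
  obtain ⟨ft, fi, fl, fr⟩ := f
  obtain ⟨gt, gi, gl, gr⟩ := g
  simp only at h
  subst h
  have key : fi = gi := by
    calc fi = Hom.comp fi (Hom.idHom X) := rfl
      _ = Hom.comp fi (Hom.comp ft gi) := by rw [gr]
      _ = Hom.comp (Hom.comp fi ft) gi := rfl
      _ = Hom.comp (Hom.idHom X) gi := by rw [fl]
      _ = gi := rfl
  subst key
  rfl

/-- The automorphism group of a graph. -/
instance (X : SGraph) : Group (Aut X) where
  mul f g := ⟨Hom.comp f.toHom g.toHom, Hom.comp g.invHom f.invHom,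
    by
      show Hom.comp (Hom.comp g.invHom f.invHom) (Hom.comp f.toHom g.toHom) = Hom.idHom X
      calc Hom.comp (Hom.comp g.invHom f.invHom) (Hom.comp f.toHom g.toHom)
          = Hom.comp g.invHom (Hom.comp (Hom.comp f.invHom f.toHom) g.toHom) := rfl
        _ = Hom.comp g.invHom (Hom.comp (Hom.idHom X) g.toHom) := by rw [f.left_inv]
        _ = Hom.comp g.invHom g.toHom := rfl
        _ = Hom.idHom X := g.left_inv,
    by
      show Hom.comp (Hom.comp f.toHom g.toHom) (Hom.comp g.invHom f.invHom) = Hom.idHom X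
      calc Hom.comp (Hom.comp f.toHom g.toHom) (Hom.comp g.invHom f.invHom)
          = Hom.comp f.toHom (Hom.comp (Hom.comp g.toHom g.invHom) f.invHom) := rfl
        _ = Hom.comp f.toHom (Hom.comp (Hom.idHom X) f.invHom) := by rw [g.right_inv]
        _ = Hom.comp f.toHom f.invHom := rfl
        _ = Hom.idHom X := f.right_inv⟩
  one := ⟨Hom.idHom X, Hom.idHom X, rfl, rfl⟩
  inv f := ⟨f.invHom, f.toHom, f.right_inv, f.left_inv⟩
  mul_assoc f g h := Aut.ext' rfl
  one_mul f := Aut.ext' rfl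
  mul_one f := Aut.ext' rfl
  inv_mul_cancel f := Aut.ext' f.left_inv

variable (X : SGraph)

/-- Paths in `X` starting at the basepoint `x₀`. -/
def PathFrom (x₀ : X.V) : Type := {γ : List X.E // ∃ y, X.IsPath x₀ y γ}

/-- Two paths from the basepoint are related if they are homologous. -/
def AtomRel (x₀ : X.V) (a b : X.PathFrom x₀) : Prop := ∃ y, X.Homologous x₀ y a.1 b.1

/-- The atoms: homology classes of paths starting at the basepoint.  These are the
vertices of the maximal abelian cover. -/
def Atom (x₀ : X.V) : Type := Quot (X.AtomRel x₀)

/-- Data for an edge of the maximal abelian cover: a path `α` from the basepoint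
together with an edge `e` with `s(e)` the endpoint of `α`. -/
def BarBase (x₀ : X.V) : Type := {q : List X.E × X.E // X.IsPath x₀ (X.s q.2) q.1}

def BarRel (x₀ : X.V) (q q' : X.BarBase x₀) : Prop :=
  q.1.2 = q'.1.2 ∧ X.Homologous x₀ (X.s q.1.2) q.1.1 q'.1.1

/-- The edges of the maximal abelian cover. -/
def BarEdge (x₀ : X.V) : Type := Quot (X.BarRel x₀)

def barS (x₀ : X.V) : X.BarEdge x₀ → X.Atom x₀ :=
  Quot.lift (fun q => Quot.mk _ ⟨q.1.1, ⟨X.s q.1.2, q.2⟩⟩)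
    (fun q q' h => Quot.sound ⟨X.s q.1.2, h.2⟩)

def barT (x₀ : X.V) : X.BarEdge x₀ → X.Atom x₀ :=
  Quot.lift
    (fun q => Quot.mk _ ⟨q.1.1 ++ [q.1.2], ⟨X.t q.1.2, q.2.append (X.isPath_single q.1.2)⟩⟩)
    (fun q q' h => by
      apply Quot.sound
      refine ⟨X.t q.1.2, ?_⟩
      show X.Homologous x₀ (X.t q.1.2) (q.1.1 ++ [q.1.2]) (q'.1.1 ++ [q'.1.2])
      rw [← h.1]
      exact Homologous.append_right h.2 (X.isPath_single q.1.2))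

def barInv (x₀ : X.V) : X.BarEdge x₀ → X.BarEdge x₀ :=
  Quot.lift
    (fun q => Quot.mk _ ⟨(q.1.1 ++ [q.1.2], X.inv q.1.2), by
      rw [X.s_inv]; exact q.2.append (X.isPath_single q.1.2)⟩)
    (fun q q' h => by
      apply Quot.sound
      constructor
      · show X.inv q.1.2 = X.inv q'.1.2
        rw [h.1]
      · show X.Homologous x₀ (X.s (X.inv q.1.2)) (q.1.1 ++ [q.1.2]) (q'.1.1 ++ [q'.1.2])
        rw [X.s_inv, ← h.1]
        exact Homologous.append_right h.2 (X.isPath_single q.1.2))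

def eproj (x₀ : X.V) : X.BarEdge x₀ → X.E := Quot.lift (fun q => q.1.2) (fun _ _ h => h.1)

def atomEnd (x₀ : X.V) : X.Atom x₀ → X.V :=
  Quot.lift (fun γ => X.endFrom x₀ γ.1)
    (fun a b h => by
      show X.endFrom x₀ a.1 = X.endFrom x₀ b.1
      obtain ⟨y, hy⟩ := h
      obtain ⟨ha, hb⟩ := hy.isPath
      rw [ha.endFrom_eq, hb.endFrom_eq])

private theorem isPath_pair (e : X.E) : X.IsPath (X.s e) (X.s e) [e, X.inv e] := by
  have tail : X.IsPath (X.t (X.inv e)) (X.s e) [] := by rw [X.t_inv]; exact .nil _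
  have mid : X.IsPath (X.t e) (X.s e) [X.inv e] := by
    have := IsPath.cons (X.inv e) tail
    rwa [X.s_inv] at this
  exact .cons e mid

private theorem hom_cancel_pair (x₀ : X.V) (q : X.BarBase x₀) :
    X.Homologous x₀ (X.s q.1.2) ((q.1.1 ++ [q.1.2]) ++ [X.inv q.1.2]) q.1.1 := by
  have p1 : X.IsPath x₀ (X.s q.1.2) (q.1.1 ++ q.1.2 :: X.inv q.1.2 :: []) :=
    q.2.append (X.isPath_pair q.1.2)
  have p2 : X.IsPath x₀ (X.s q.1.2) (q.1.1 ++ []) := by simpa using q.2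
  have := Homologous.cancel q.1.1 [] q.1.2 p1 p2
  simpa using this

/-- The maximal abelian cover of `X` relative to the basepoint `x₀`. -/
def Bar (x₀ : X.V) : SGraph where
  V := X.Atom x₀
  E := X.BarEdge x₀
  s := X.barS x₀
  t := X.barT x₀
  inv := X.barInv x₀
  s_inv := fun e =>
    @Quot.ind _ _ (fun e => X.barS x₀ (X.barInv x₀ e) = X.barT x₀ e)
      (fun q => rfl) e
  t_inv := fun e =>
    @Quot.ind _ _ (fun e => X.barT x₀ (X.barInv x₀ e) = X.barS x₀ e)
      (fun q => Quot.sound ⟨X.s q.1.2, by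
        show X.Homologous x₀ (X.s q.1.2) ((q.1.1 ++ [q.1.2]) ++ [X.inv q.1.2]) q.1.1
        exact X.hom_cancel_pair x₀ q⟩) e
  inv_inv := fun e =>
    @Quot.ind _ _ (fun e => X.barInv x₀ (X.barInv x₀ e) = e)
      (fun q => Quot.sound ⟨by show X.inv (X.inv q.1.2) = q.1.2; rw [X.inv_inv], by
        show X.Homologous x₀ (X.s (X.inv (X.inv q.1.2)))
          ((q.1.1 ++ [q.1.2]) ++ [X.inv q.1.2]) q.1.1
        rw [X.inv_inv]
        exact X.hom_cancel_pair x₀ q⟩) e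
  inv_ne := fun e =>
    @Quot.ind _ _ (fun e => X.barInv x₀ e ≠ e)
      (fun q h => X.inv_ne q.1.2 (congrArg (X.eproj x₀) h)) e

/-- The covering map from the maximal abelian cover to `X`. -/
def proj (x₀ : X.V) : Hom (X.Bar x₀) X where
  vMap := X.atomEnd x₀
  eMap := X.eproj x₀
  map_s := fun e =>
    @Quot.ind _ _ (fun e => X.s (X.eproj x₀ e) = X.atomEnd x₀ (X.barS x₀ e))
      (fun q => (q.2.endFrom_eq).symm) e
  map_t := fun e =>
    @Quot.ind _ _ (fun e => X.t (X.eproj x₀ e) = X.atomEnd x₀ (X.barT x₀ e))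
      (fun q => ((q.2.append (X.isPath_single q.1.2)).endFrom_eq).symm) e
  map_inv := fun e =>
    @Quot.ind _ _ (fun e => X.inv (X.eproj x₀ e) = X.eproj x₀ (X.barInv x₀ e))
      (fun q => rfl) e

/-- `g` covers `f` when `q ∘ g = f ∘ q`. -/
def Covers (x₀ : X.V) (g : Aut (X.Bar x₀)) (f : Aut X) : Prop :=
  Hom.comp (X.proj x₀) g.toHom = Hom.comp f.toHom (X.proj x₀)

/-- The group of covering symmetries: automorphisms of the maximal abelian cover
that cover some automorphism of `X`. -/
def Cov (x₀ : X.V) : Subgroup (Aut (X.Bar x₀)) where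
  carrier := {g | ∃ f : Aut X, X.Covers x₀ g f}
  one_mem' := ⟨1, rfl⟩
  mul_mem' := by
    rintro a b ⟨f, hf⟩ ⟨f', hf'⟩
    refine ⟨f * f', ?_⟩
    show Hom.comp (X.proj x₀) (Hom.comp a.toHom b.toHom)
        = Hom.comp (Hom.comp f.toHom f'.toHom) (X.proj x₀)
    calc Hom.comp (X.proj x₀) (Hom.comp a.toHom b.toHom)
        = Hom.comp (Hom.comp (X.proj x₀) a.toHom) b.toHom := rfl
      _ = Hom.comp (Hom.comp f.toHom (X.proj x₀)) b.toHom := by rw [hf]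
      _ = Hom.comp f.toHom (Hom.comp (X.proj x₀) b.toHom) := rfl
      _ = Hom.comp f.toHom (Hom.comp f'.toHom (X.proj x₀)) := by rw [hf']
      _ = Hom.comp (Hom.comp f.toHom f'.toHom) (X.proj x₀) := rfl
  inv_mem' := by
    rintro a ⟨f, hf⟩
    refine ⟨f⁻¹, ?_⟩
    show Hom.comp (X.proj x₀) a.invHom = Hom.comp f.invHom (X.proj x₀)
    have key : Hom.comp (Hom.comp f.invHom (X.proj x₀)) a.toHom = X.proj x₀ := by
      calc Hom.comp (Hom.comp f.invHom (X.proj x₀)) a.toHom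
          = Hom.comp f.invHom (Hom.comp (X.proj x₀) a.toHom) := rfl
        _ = Hom.comp f.invHom (Hom.comp f.toHom (X.proj x₀)) := by rw [hf]
        _ = Hom.comp (Hom.comp f.invHom f.toHom) (X.proj x₀) := rfl
        _ = Hom.comp (Hom.idHom X) (X.proj x₀) := by rw [f.left_inv]
        _ = X.proj x₀ := rfl
    calc Hom.comp (X.proj x₀) a.invHom
        = Hom.comp (Hom.comp (Hom.comp f.invHom (X.proj x₀)) a.toHom) a.invHom := by rw [key]
      _ = Hom.comp (Hom.comp f.invHom (X.proj x₀)) (Hom.comp a.toHom a.invHom) := rfl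
      _ = Hom.comp (Hom.comp f.invHom (X.proj x₀)) (Hom.idHom _) := by rw [a.right_inv]
      _ = Hom.comp f.invHom (X.proj x₀) := rfl

end SGraph
namespace SGraph

variable (X : SGraph)

/-- Loops based at `x₀`. -/
def LoopAt (x₀ : X.V) : Type := {γ : List X.E // X.IsPath x₀ x₀ γ}

def H1Rel (x₀ : X.V) (a b : X.LoopAt x₀) : Prop := X.Homologous x₀ x₀ a.1 b.1

/-- The group of homology classes of loops based at `x₀`, with composition as
the group operation: this is `H₁(X,ℤ)`. -/
def H1 (x₀ : X.V) : Type := Quot (X.H1Rel x₀)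

def h1one (x₀ : X.V) : X.H1 x₀ := Quot.mk _ ⟨[], .nil x₀⟩

def h1mul (x₀ : X.V) : X.H1 x₀ → X.H1 x₀ → X.H1 x₀ :=
  Quot.lift
    (fun a => Quot.lift
      (fun b => Quot.mk (X.H1Rel x₀) ⟨a.1 ++ b.1, a.2.append b.2⟩)
      (fun b b' hb => Quot.sound (Homologous.prepend_left a.2 hb)))
    (fun a a' ha => by
      funext b
      refine @Quot.ind _ _
        (fun b => Quot.lift _ _ b = Quot.lift _ _ b) (fun b => ?_) b
      exact Quot.sound (ha.append_right b.2))

def h1inv (x₀ : X.V) : X.H1 x₀ → X.H1 x₀ :=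
  Quot.lift (fun a => Quot.mk (X.H1Rel x₀) ⟨X.revP a.1, a.2.revP⟩)
    (fun a a' h => Quot.sound h.revP)

theorem h1mul_assoc (x₀ : X.V) (a b c : X.H1 x₀) :
    X.h1mul x₀ (X.h1mul x₀ a b) c = X.h1mul x₀ a (X.h1mul x₀ b c) := by
  refine @Quot.ind _ _
    (fun a => ∀ b c, X.h1mul x₀ (X.h1mul x₀ a b) c = X.h1mul x₀ a (X.h1mul x₀ b c))
    (fun a => ?_) a b c
  intro b c
  refine @Quot.ind _ _
    (fun b => ∀ c, X.h1mul x₀ (X.h1mul x₀ (Quot.mk _ a) b) c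
      = X.h1mul x₀ (Quot.mk _ a) (X.h1mul x₀ b c)) (fun b => ?_) b c
  intro c
  refine @Quot.ind _ _
    (fun c => X.h1mul x₀ (X.h1mul x₀ (Quot.mk _ a) (Quot.mk _ b)) c
      = X.h1mul x₀ (Quot.mk _ a) (X.h1mul x₀ (Quot.mk _ b) c)) (fun c => ?_) c
  exact congrArg (Quot.mk _) (Subtype.ext (List.append_assoc a.1 b.1 c.1))

theorem h1_one_mul (x₀ : X.V) (a : X.H1 x₀) : X.h1mul x₀ (X.h1one x₀) a = a := by
  refine @Quot.ind _ _ (fun a => X.h1mul x₀ (X.h1one x₀) a = a) (fun a => ?_) a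
  rfl

theorem h1_mul_one (x₀ : X.V) (a : X.H1 x₀) : X.h1mul x₀ a (X.h1one x₀) = a := by
  refine @Quot.ind _ _ (fun a => X.h1mul x₀ a (X.h1one x₀) = a) (fun a => ?_) a
  exact congrArg (Quot.mk _) (Subtype.ext (List.append_nil a.1))

theorem h1_inv_mul (x₀ : X.V) (a : X.H1 x₀) :
    X.h1mul x₀ (X.h1inv x₀ a) a = X.h1one x₀ := by
  refine @Quot.ind _ _ (fun a => X.h1mul x₀ (X.h1inv x₀ a) a = X.h1one x₀)
    (fun a => ?_) a
  exact Quot.sound (homologous_revP_append a.2)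

instance instGroupH1 (x₀ : X.V) : Group (X.H1 x₀) where
  one := X.h1one x₀
  mul := X.h1mul x₀
  inv := X.h1inv x₀
  mul_assoc := X.h1mul_assoc x₀
  one_mul := X.h1_one_mul x₀
  mul_one := X.h1_mul_one x₀
  inv_mul_cancel := X.h1_inv_mul x₀

theorem boundary_add (c d : ↥X.C1) : X.boundary (c + d) = X.boundary c + X.boundary d := by
  show Finsupp.sum ((c : X.E →₀ ℝ) + (d : X.E →₀ ℝ)) _ = _
  exact Finsupp.sum_add_index' (fun e => zero_smul ℝ _) (fun e x y => add_smul x y _)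

theorem boundary_smul (r : ℝ) (c : ↥X.C1) : X.boundary (r • c) = r • X.boundary c := by
  unfold boundary
  have hc : ((r • c : ↥X.C1) : X.E →₀ ℝ) = r • (c : X.E →₀ ℝ) := rfl
  rw [hc, Finsupp.sum_smul_index, Finsupp.smul_sum]
  · exact Finsupp.sum_congr fun e _ => by rw [mul_smul]
  · intro e
    exact zero_smul ℝ _

theorem boundary_zero : X.boundary 0 = 0 := by
  show Finsupp.sum (0 : X.E →₀ ℝ) _ = 0
  exact Finsupp.sum_zero_index

/-- The space `Z₁(X,ℝ)` of 1-cycles, as a subspace of `C₁(X,ℝ)`. -/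
noncomputable def Z1 : Submodule ℝ ↥X.C1 where
  carrier := {c | X.IsCycle c}
  add_mem' := fun {a b} ha hb => by
    show X.IsCycle (a + b)
    unfold IsCycle at *
    rw [X.boundary_add, ha, hb, add_zero]
  zero_mem' := X.boundary_zero
  smul_mem' := fun r c hc => by
    show X.IsCycle (r • c)
    unfold IsCycle at *
    rw [X.boundary_smul, hc, smul_zero]

/-- A map of the space of 1-cycles is affine if it is a linear map followed by
a translation. -/
def IsAffine (T : ↥X.Z1 → ↥X.Z1) : Prop :=
  ∃ (L : ↥X.Z1 →ₗ[ℝ] ↥X.Z1) (v : ↥X.Z1), ∀ c, T c = v + L c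

/-- The permutation of edges induced by an automorphism. -/
def eEquiv (f : X.Aut) : X.E ≃ X.E where
  toFun := f.toHom.eMap
  invFun := f.invHom.eMap
  left_inv := fun e => congrFun (congrArg Hom.eMap f.left_inv) e
  right_inv := fun e => congrFun (congrArg Hom.eMap f.right_inv) e

/-- The linear action `f_*` of an automorphism `f` on 1-chains, with
`f_*(e) = f(e)` for every edge. -/
noncomputable def pushChain (f : X.Aut) (c : ↥X.C1) : ↥X.C1 :=
  ⟨Finsupp.equivMapDomain (X.eEquiv f) (c : X.E →₀ ℝ), by
    intro e
    rw [Finsupp.equivMapDomain_apply, Finsupp.equivMapDomain_apply]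
    have h1 : (X.eEquiv f).symm (X.inv e) = X.inv ((X.eEquiv f).symm e) := by
      show f.invHom.eMap (X.inv e) = X.inv (f.invHom.eMap e)
      exact (f.invHom.map_inv e).symm
    rw [h1]
    exact c.2 _⟩

/-- The image of the atom `⟦δ⟧` under the covering symmetry determined by the
pair `(f, ⟦β⟧)`: the atom `⟦β f(δ)⟧`. -/
def mapPathFrom (x₀ : X.V) (f : X.Aut) (β : List X.E)
    (hβ : X.IsPath x₀ (f.toHom.vMap x₀) β) (δ : X.PathFrom x₀) : X.PathFrom x₀ :=
  ⟨β ++ δ.1.map f.toHom.eMap, by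
    obtain ⟨y, hy⟩ := δ.2
    exact ⟨f.toHom.vMap y, hβ.append (hy.map f.toHom)⟩⟩

/-- The image of the edge `(⟦α⟧, e)` under the covering symmetry determined by the
pair `(f, ⟦β⟧)`: the edge `(⟦β f(α)⟧, f(e))`. -/
def mapBarBase (x₀ : X.V) (f : X.Aut) (β : List X.E)
    (hβ : X.IsPath x₀ (f.toHom.vMap x₀) β) (q : X.BarBase x₀) : X.BarBase x₀ :=
  ⟨(β ++ q.1.1.map f.toHom.eMap, f.toHom.eMap q.1.2), by
    show X.IsPath x₀ (X.s (f.toHom.eMap q.1.2)) _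
    rw [f.toHom.map_s]
    exact hβ.append (q.2.map f.toHom)⟩

/-- The automorphism `g` of the maximal abelian cover acts as the pair `(f, ⟦β⟧)`:
it maps each atom `⟦α⟧` to `⟦β f(α)⟧` and each edge `(⟦α⟧, e)` to `(⟦β f(α)⟧, f(e))`. -/
def ActsAs (x₀ : X.V) (g : Aut (X.Bar x₀)) (f : X.Aut) (β : List X.E) : Prop :=
  ∃ hβ : X.IsPath x₀ (f.toHom.vMap x₀) β,
    (∀ δ : X.PathFrom x₀,
      g.toHom.vMap (Quot.mk _ δ) = Quot.mk _ (X.mapPathFrom x₀ f β hβ δ)) ∧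
    (∀ q : X.BarBase x₀,
      g.toHom.eMap (Quot.mk _ q) = Quot.mk _ (X.mapBarBase x₀ f β hβ q))

/-- The automorphism `g` of the maximal abelian cover is the deck transformation
determined by the loop `γ` based at `x₀`: it maps each atom `⟦δ⟧` to `⟦γδ⟧`. -/
def IsDeck (x₀ : X.V) (g : Aut (X.Bar x₀)) (γ : X.LoopAt x₀) : Prop :=
  ∀ δ : X.PathFrom x₀, g.toHom.vMap (Quot.mk _ δ) =
    Quot.mk _ (⟨γ.1 ++ δ.1, by
      obtain ⟨y, hy⟩ := δ.2
      exact ⟨y, γ.2.append hy⟩⟩ : X.PathFrom x₀)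

/-- `ρ` is an action of the group of covering symmetries by affine transformations
of `Z₁(X,ℝ)` for which the embedding of the atoms is equivariant:
`ρ(g)(i(⟦α⟧)) = i(g(⟦α⟧))`. -/
def GoodAction (x₀ : X.V) (π : ↥X.C1 → ↥X.C1)
    (ρ : ↥(X.Cov x₀) → (↥X.Z1 → ↥X.Z1)) : Prop :=
  ρ 1 = id ∧ (∀ g h, ρ (g * h) = ρ g ∘ ρ h) ∧ (∀ g, X.IsAffine (ρ g)) ∧
  ∀ (g : ↥(X.Cov x₀)) (α δ : X.PathFrom x₀),
    g.1.toHom.vMap (Quot.mk _ α) = Quot.mk _ δ →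
    ∀ z w : ↥X.Z1, (z : ↥X.C1) = π (X.pathChain α.1) →
      (w : ↥X.C1) = π (X.pathChain δ.1) → ρ g z = w

end SGraph


namespace SGraph

variable {X : SGraph}

theorem Hom.ext'' {X Y : SGraph} {f g : Hom X Y} (hv : f.vMap = g.vMap)
    (he : f.eMap = g.eMap) : f = g := by
  obtain ⟨fv, fe, _, _, _⟩ := f
  obtain ⟨gv, ge, _, _, _⟩ := g
  dsimp only at hv he
  subst hv; subst he
  rfl

theorem IsPath.endpoint_unique {x y y' : X.V} {γ : List X.E}
    (h : X.IsPath x y γ) (h' : X.IsPath x y' γ) : y = y' := by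
  rw [← h.endFrom_eq, ← h'.endFrom_eq]

theorem isPath_nil_inv {x y : X.V} (h : X.IsPath x y []) : x = y := by
  cases h; rfl

theorem isPath_cons_inv {x y : X.V} {a : X.E} {l : List X.E}
    (h : X.IsPath x y (a :: l)) : x = X.s a ∧ X.IsPath (X.t a) y l := by
  cases h
  exact ⟨rfl, by assumption⟩

theorem isPath_append_single {y : X.V} {e : X.E} :
    ∀ {γ : List X.E} {x : X.V}, X.IsPath x y (γ ++ [e]) →
      X.IsPath x (X.s e) γ ∧ y = X.t e := by
  intro γ
  induction γ with
  | nil =>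
      intro x h
      obtain ⟨h1, h2⟩ := isPath_cons_inv h
      subst h1
      exact ⟨.nil _, (isPath_nil_inv h2).symm⟩
  | cons a γ ih =>
      intro x h
      obtain ⟨h1, h2⟩ := isPath_cons_inv h
      subst h1
      obtain ⟨h3, h4⟩ := ih h2
      exact ⟨.cons a h3, h4⟩

theorem revP_revP (γ : List X.E) : X.revP (X.revP γ) = γ := by
  simp [SGraph.revP, List.map_reverse, List.map_map, Function.comp_def, X.inv_inv]

theorem revP_map {X Y : SGraph} (f : Hom X Y) (γ : List X.E) :
    Y.revP (γ.map f.eMap) = (X.revP γ).map f.eMap := by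
  unfold SGraph.revP
  rw [List.map_reverse, List.map_map, List.map_map]
  congr 1
  apply List.map_congr_left
  intro e _
  exact f.map_inv e

theorem Homologous.mapHom {X Y : SGraph} {x y : X.V} {a b : List X.E}
    (h : X.Homologous x y a b) (f : Hom X Y) :
    Y.Homologous (f.vMap x) (f.vMap y) (a.map f.eMap) (b.map f.eMap) := by
  induction h with
  | refl γ hγ => exact .refl _ (hγ.map f)
  | cancel γ δ e h h' =>
      have e1 : (γ ++ e :: X.inv e :: δ).map f.eMap
          = γ.map f.eMap ++ f.eMap e :: Y.inv (f.eMap e) :: δ.map f.eMap := by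
        simp [f.map_inv]
      have e2 : (γ ++ δ).map f.eMap = γ.map f.eMap ++ δ.map f.eMap := by simp
      have p1 := h.map f
      have p2 := h'.map f
      rw [e1] at p1 ⊢
      rw [e2] at p2 ⊢
      exact Homologous.cancel _ _ _ p1 p2
  | swap γ σ τ δ v hσ hτ h h' =>
      have e1 : (γ ++ (σ ++ (τ ++ δ))).map f.eMap
          = γ.map f.eMap ++ (σ.map f.eMap ++ (τ.map f.eMap ++ δ.map f.eMap)) := by simp
      have e2 : (γ ++ (τ ++ (σ ++ δ))).map f.eMap
          = γ.map f.eMap ++ (τ.map f.eMap ++ (σ.map f.eMap ++ δ.map f.eMap)) := by simp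
      have p1 := h.map f
      have p2 := h'.map f
      rw [e1] at p1 ⊢
      rw [e2] at p2 ⊢
      exact Homologous.swap _ _ _ _ (f.vMap v) (hσ.map f) (hτ.map f) p1 p2
  | symm h ih => exact ih.symm
  | trans h1 h2 ih1 ih2 => exact ih1.trans ih2

theorem atomRel_equivalence (X : SGraph) (x₀ : X.V) : Equivalence (X.AtomRel x₀) := by
  constructor
  · intro a
    obtain ⟨y, hy⟩ := a.2
    exact ⟨y, .refl _ hy⟩
  · rintro a b ⟨y, h⟩
    exact ⟨y, h.symm⟩
  · rintro a b c ⟨y, h⟩ ⟨y', h'⟩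
    have : y = y' := (h.isPath.2).endpoint_unique h'.isPath.1
    subst this
    exact ⟨y, h.trans h'⟩

theorem barRel_equivalence (X : SGraph) (x₀ : X.V) : Equivalence (X.BarRel x₀) := by
  constructor
  · intro a
    exact ⟨rfl, .refl _ a.2⟩
  · rintro a b ⟨he, h⟩
    refine ⟨he.symm, ?_⟩
    rw [← he]
    exact h.symm
  · rintro a b c ⟨he, h⟩ ⟨he', h'⟩
    refine ⟨he.trans he', ?_⟩
    rw [← he] at h'
    exact h.trans h'

theorem atom_exact {X : SGraph} {x₀ : X.V} {a b : X.PathFrom x₀}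
    (h : Quot.mk (X.AtomRel x₀) a = Quot.mk (X.AtomRel x₀) b) : X.AtomRel x₀ a b :=
  ((X.atomRel_equivalence x₀).eqvGen_iff).1 (Quot.eq.1 h)

theorem bar_exact {X : SGraph} {x₀ : X.V} {a b : X.BarBase x₀}
    (h : Quot.mk (X.BarRel x₀) a = Quot.mk (X.BarRel x₀) b) : X.BarRel x₀ a b :=
  ((X.barRel_equivalence x₀).eqvGen_iff).1 (Quot.eq.1 h)

theorem barEdge_ext (X : SGraph) (x₀ : X.V) (a b : X.BarEdge x₀)
    (hs : X.barS x₀ a = X.barS x₀ b) (hp : X.eproj x₀ a = X.eproj x₀ b) : a = b := by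
  induction a using Quot.ind with | _ q =>
  induction b using Quot.ind with | _ q' =>
  apply Quot.sound
  obtain ⟨y, h⟩ := atom_exact hs
  refine ⟨hp, ?_⟩
  have hy : y = X.s q.1.2 := (h.isPath.1).endpoint_unique q.2
  subst hy
  exact h

/-- The vertex map of the covering symmetry determined by `(f, β)`. -/
def barVMap (X : SGraph) (x₀ : X.V) (f : X.Aut) (β : List X.E)
    (hβ : X.IsPath x₀ (f.toHom.vMap x₀) β) : X.Atom x₀ → X.Atom x₀ :=
  Quot.lift (fun δ => Quot.mk _ (X.mapPathFrom x₀ f β hβ δ))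
    (by
      rintro δ δ' ⟨y, h⟩
      exact Quot.sound ⟨f.toHom.vMap y, Homologous.prepend_left hβ (h.mapHom f.toHom)⟩)

/-- The edge map of the covering symmetry determined by `(f, β)`. -/
def barEMap (X : SGraph) (x₀ : X.V) (f : X.Aut) (β : List X.E)
    (hβ : X.IsPath x₀ (f.toHom.vMap x₀) β) : X.BarEdge x₀ → X.BarEdge x₀ :=
  Quot.lift (fun q => Quot.mk _ (X.mapBarBase x₀ f β hβ q))
    (by
      rintro q q' ⟨he, h⟩
      refine Quot.sound ⟨congrArg f.toHom.eMap he, ?_⟩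
      show X.Homologous x₀ (X.s (f.toHom.eMap q.1.2))
        (β ++ q.1.1.map f.toHom.eMap) (β ++ q'.1.1.map f.toHom.eMap)
      rw [f.toHom.map_s]
      exact Homologous.prepend_left hβ (h.mapHom f.toHom))

/-- The map of graphs on the maximal abelian cover determined by `(f, β)`. -/
def barMapHom (X : SGraph) (x₀ : X.V) (f : X.Aut) (β : List X.E)
    (hβ : X.IsPath x₀ (f.toHom.vMap x₀) β) : Hom (X.Bar x₀) (X.Bar x₀) where
  vMap := X.barVMap x₀ f β hβ
  eMap := X.barEMap x₀ f β hβ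
  map_s := fun e =>
    @Quot.ind _ _
      (fun e => X.barS x₀ (X.barEMap x₀ f β hβ e) = X.barVMap x₀ f β hβ (X.barS x₀ e))
      (fun q => congrArg (Quot.mk _) (Subtype.ext rfl)) e
  map_t := fun e =>
    @Quot.ind _ _
      (fun e => X.barT x₀ (X.barEMap x₀ f β hβ e) = X.barVMap x₀ f β hβ (X.barT x₀ e))
      (fun q => congrArg (Quot.mk _) (Subtype.ext (by
        show (β ++ q.1.1.map f.toHom.eMap) ++ [f.toHom.eMap q.1.2]
            = β ++ (q.1.1 ++ [q.1.2]).map f.toHom.eMap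
        simp))) e
  map_inv := fun e =>
    @Quot.ind _ _
      (fun e => X.barInv x₀ (X.barEMap x₀ f β hβ e) = X.barEMap x₀ f β hβ (X.barInv x₀ e))
      (fun q => by
        apply congrArg (Quot.mk _)
        apply Subtype.ext
        show ((β ++ q.1.1.map f.toHom.eMap) ++ [f.toHom.eMap q.1.2],
              X.inv (f.toHom.eMap q.1.2))
            = (β ++ (q.1.1 ++ [q.1.2]).map f.toHom.eMap, f.toHom.eMap (X.inv q.1.2))
        rw [f.toHom.map_inv]
        simp) e

end SGraph

namespace SGraph

theorem map_map_left {X : SGraph} (f : X.Aut) (l : List X.E) :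
    (l.map f.toHom.eMap).map f.invHom.eMap = l := by
  rw [List.map_map]
  have h : (f.invHom.eMap ∘ f.toHom.eMap) = id :=
    funext fun e => congrFun (congrArg Hom.eMap f.left_inv) e
  rw [h, List.map_id]

theorem map_map_right {X : SGraph} (f : X.Aut) (l : List X.E) :
    (l.map f.invHom.eMap).map f.toHom.eMap = l := by
  rw [List.map_map]
  have h : (f.toHom.eMap ∘ f.invHom.eMap) = id :=
    funext fun e => congrFun (congrArg Hom.eMap f.right_inv) e
  rw [h, List.map_id]

theorem cancel_prepend (X : SGraph) {x₀ v y : X.V} {γ l : List X.E}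
    (hγ : X.IsPath v x₀ γ) (hl : X.IsPath x₀ y l) :
    X.Homologous x₀ y ((X.revP γ ++ γ) ++ l) l := by
  have h := (X.homologous_revP_append hγ).append_right hl
  simpa only [List.nil_append] using h

theorem hbinv (X : SGraph) {x₀ : X.V} (f : X.Aut) {β : List X.E}
    (hβ : X.IsPath x₀ (f.toHom.vMap x₀) β) :
    X.IsPath x₀ ((f⁻¹).toHom.vMap x₀) ((X.revP β).map f.invHom.eMap) := by
  have h := (hβ.revP).map f.invHom
  have e0 : f.invHom.vMap (f.toHom.vMap x₀) = x₀ :=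
    congrFun (congrArg Hom.vMap f.left_inv) x₀
  rw [e0] at h
  exact h

theorem left_cancel_hom (X : SGraph) {x₀ : X.V} (f : X.Aut) {β : List X.E}
    (hβ : X.IsPath x₀ (f.toHom.vMap x₀) β) {y : X.V} {l : List X.E}
    (hl : X.IsPath x₀ y l) :
    X.Homologous x₀ y
      (((X.revP β).map f.invHom.eMap) ++ (β ++ l.map f.toHom.eMap).map f.invHom.eMap)
      l := by
  have e0 : f.invHom.vMap (f.toHom.vMap x₀) = x₀ :=
    congrFun (congrArg Hom.vMap f.left_inv) x₀
  have hγ : X.IsPath (f.invHom.vMap x₀) x₀ (β.map f.invHom.eMap) := by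
    have h := hβ.map f.invHom
    rwa [e0] at h
  have hcan := X.cancel_prepend hγ hl
  have elist : ((X.revP β).map f.invHom.eMap)
        ++ (β ++ l.map f.toHom.eMap).map f.invHom.eMap
      = (X.revP (β.map f.invHom.eMap) ++ β.map f.invHom.eMap) ++ l := by
    rw [revP_map f.invHom β, List.map_append, map_map_left, List.append_assoc]
  rw [elist]
  exact hcan

theorem right_cancel_hom (X : SGraph) {x₀ : X.V} (f : X.Aut) {β : List X.E}
    (hβ : X.IsPath x₀ (f.toHom.vMap x₀) β) {y : X.V} {l : List X.E}
    (hl : X.IsPath x₀ y l) :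
    X.Homologous x₀ y
      (β ++ (((X.revP β).map f.invHom.eMap) ++ l.map f.invHom.eMap).map f.toHom.eMap)
      l := by
  have hcan := X.cancel_prepend hβ.revP hl
  have elist : β ++ (((X.revP β).map f.invHom.eMap) ++ l.map f.invHom.eMap).map f.toHom.eMap
      = (X.revP (X.revP β) ++ X.revP β) ++ l := by
    rw [List.map_append, map_map_right, map_map_right, revP_revP, List.append_assoc]
  rw [elist]
  exact hcan

/-- The automorphism of the maximal abelian cover determined by `(f, β)`. -/
def barAut (X : SGraph) (x₀ : X.V) (f : X.Aut) (β : List X.E)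
    (hβ : X.IsPath x₀ (f.toHom.vMap x₀) β) : Aut (X.Bar x₀) where
  toHom := X.barMapHom x₀ f β hβ
  invHom := X.barMapHom x₀ f⁻¹ ((X.revP β).map f.invHom.eMap) (X.hbinv f hβ)
  left_inv := by
    apply Hom.ext''
    · funext a
      induction a using Quot.ind with | _ δ =>
      obtain ⟨y, hy⟩ := δ.2
      exact Quot.sound ⟨y, X.left_cancel_hom f hβ hy⟩
    · funext e
      induction e using Quot.ind with | _ q =>
      have he2 : f.invHom.eMap (f.toHom.eMap q.1.2) = q.1.2 :=
        congrFun (congrArg Hom.eMap f.left_inv) q.1.2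
      refine Quot.sound ⟨he2, ?_⟩
      show X.Homologous x₀ (X.s (f.invHom.eMap (f.toHom.eMap q.1.2)))
        (((X.revP β).map f.invHom.eMap)
          ++ (β ++ q.1.1.map f.toHom.eMap).map f.invHom.eMap) q.1.1
      rw [he2]
      exact X.left_cancel_hom f hβ q.2
  right_inv := by
    apply Hom.ext''
    · funext a
      induction a using Quot.ind with | _ δ =>
      obtain ⟨y, hy⟩ := δ.2
      exact Quot.sound ⟨y, X.right_cancel_hom f hβ hy⟩
    · funext e
      induction e using Quot.ind with | _ q =>
      have he2 : f.toHom.eMap (f.invHom.eMap q.1.2) = q.1.2 :=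
        congrFun (congrArg Hom.eMap f.right_inv) q.1.2
      refine Quot.sound ⟨he2, ?_⟩
      show X.Homologous x₀ (X.s (f.toHom.eMap (f.invHom.eMap q.1.2)))
        (β ++ (((X.revP β).map f.invHom.eMap)
          ++ q.1.1.map f.invHom.eMap).map f.toHom.eMap) q.1.1
      rw [he2]
      exact X.right_cancel_hom f hβ q.2

theorem barAut_covers (X : SGraph) (x₀ : X.V) (f : X.Aut) (β : List X.E)
    (hβ : X.IsPath x₀ (f.toHom.vMap x₀) β) :
    X.Covers x₀ (X.barAut x₀ f β hβ) f := by
  apply Hom.ext''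
  · funext a
    induction a using Quot.ind with | _ δ =>
    obtain ⟨y, hy⟩ := δ.2
    show X.endFrom x₀ (β ++ δ.1.map f.toHom.eMap) = f.toHom.vMap (X.endFrom x₀ δ.1)
    rw [hy.endFrom_eq, (hβ.append (hy.map f.toHom)).endFrom_eq]
  · funext e
    induction e using Quot.ind with | _ q =>
    rfl

end SGraph

/-- Lemma: classification of covering symmetries.  For a connected
graph `X` with basepoint `x₀`, the map sending a pair `(f, ⟦β⟧)`, where `f ∈ Aut(X)`
and `β : x₀ → f(x₀)`, to the automorphism of the maximal abelian cover acting by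
`⟦α⟧ ↦ ⟦β f(α)⟧` on atoms and `(⟦α⟧, e) ↦ (⟦β f(α)⟧, f(e))` on edges, is a bijection
from the set of such pairs onto `Cov(X)`: every pair determines an element of `Cov(X)`,
homologous choices of `β` (with the same `f`) determine the same element, distinct pairs
determine distinct elements, and every element of `Cov(X)` arises this way. -/
theorem cov_classification (X : SGraph) (hconn : X.Connected) (x₀ : X.V) :
    (∀ (f : X.Aut) (β : List X.E), X.IsPath x₀ (f.toHom.vMap x₀) β →
      ∃ g : (X.Bar x₀).Aut, g ∈ X.Cov x₀ ∧ X.ActsAs x₀ g f β) ∧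
    (∀ (f : X.Aut) (β β' : List X.E) (g g' : (X.Bar x₀).Aut),
      X.ActsAs x₀ g f β → X.ActsAs x₀ g' f β' →
      X.Homologous x₀ (f.toHom.vMap x₀) β β' → g = g') ∧
    (∀ (f f' : X.Aut) (β β' : List X.E) (g : (X.Bar x₀).Aut),
      X.ActsAs x₀ g f β → X.ActsAs x₀ g f' β' →
      f = f' ∧ X.Homologous x₀ (f.toHom.vMap x₀) β β') ∧
    (∀ g ∈ X.Cov x₀, ∃ (f : X.Aut) (β : List X.E), X.ActsAs x₀ g f β) := by
  refine ⟨?_, ?_, ?_, ?_⟩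
  · -- existence
    intro f β hβ
    exact ⟨X.barAut x₀ f β hβ, ⟨f, X.barAut_covers x₀ f β hβ⟩, hβ, fun δ => rfl, fun q => rfl⟩
  · -- well-definedness
    intro f β β' g g' h1 h2 hom
    obtain ⟨hβ, hv, he⟩ := h1
    obtain ⟨hβ', hv', he'⟩ := h2
    apply SGraph.Aut.ext'
    apply SGraph.Hom.ext''
    · funext a
      induction a using Quot.ind with | _ δ =>
      rw [hv δ, hv' δ]
      obtain ⟨y, hy⟩ := δ.2
      exact Quot.sound ⟨f.toHom.vMap y, hom.append_right (hy.map f.toHom)⟩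
    · funext e
      induction e using Quot.ind with | _ q =>
      rw [he q, he' q]
      refine Quot.sound ⟨rfl, ?_⟩
      show X.Homologous x₀ (X.s (f.toHom.eMap q.1.2))
        (β ++ q.1.1.map f.toHom.eMap) (β' ++ q.1.1.map f.toHom.eMap)
      rw [f.toHom.map_s]
      exact hom.append_right (q.2.map f.toHom)
  · -- injectivity
    intro f f' β β' g h1 h2
    obtain ⟨hβ, hv, he⟩ := h1
    obtain ⟨hβ', hv', he'⟩ := h2
    have hVeq : f.toHom.vMap = f'.toHom.vMap := by
      funext x
      obtain ⟨l, hl⟩ := hconn x₀ x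
      have h := (hv ⟨l, ⟨x, hl⟩⟩).symm.trans (hv' ⟨l, ⟨x, hl⟩⟩)
      obtain ⟨y, hom⟩ := SGraph.atom_exact h
      have e1 : y = f.toHom.vMap x :=
        hom.isPath.1.endpoint_unique (hβ.append (hl.map f.toHom))
      have e2 : y = f'.toHom.vMap x :=
        hom.isPath.2.endpoint_unique (hβ'.append (hl.map f'.toHom))
      rw [← e1, ← e2]
    have hEeq : f.toHom.eMap = f'.toHom.eMap := by
      funext e
      obtain ⟨l, hl⟩ := hconn x₀ (X.s e)
      have h := (he ⟨(l, e), hl⟩).symm.trans (he' ⟨(l, e), hl⟩)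
      exact congrArg (X.eproj x₀) h
    have hf : f = f' := SGraph.Aut.ext' (SGraph.Hom.ext'' hVeq hEeq)
    subst hf
    refine ⟨rfl, ?_⟩
    have h := (hv ⟨[], ⟨x₀, .nil x₀⟩⟩).symm.trans (hv' ⟨[], ⟨x₀, .nil x₀⟩⟩)
    obtain ⟨y, hom⟩ := SGraph.atom_exact h
    have e1 : β ++ ([] : List X.E).map f.toHom.eMap = β := by simp
    have e2 : β' ++ ([] : List X.E).map f.toHom.eMap = β' := by simp
    have hom2 : X.Homologous x₀ y (β ++ ([] : List X.E).map f.toHom.eMap)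
        (β' ++ ([] : List X.E).map f.toHom.eMap) := hom
    rw [e1, e2] at hom2
    have e3 : y = f.toHom.vMap x₀ := hom2.isPath.1.endpoint_unique hβ
    exact e3 ▸ hom2
  · -- surjectivity
    rintro g ⟨f, hcov⟩
    have pv : ∀ a, X.atomEnd x₀ (g.toHom.vMap a) = f.toHom.vMap (X.atomEnd x₀ a) :=
      fun a => congrFun (congrArg SGraph.Hom.vMap hcov) a
    have pe : ∀ e, X.eproj x₀ (g.toHom.eMap e) = f.toHom.eMap (X.eproj x₀ e) :=
      fun e => congrFun (congrArg SGraph.Hom.eMap hcov) e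
    obtain ⟨βp, hb⟩ := Quot.exists_rep
      (g.toHom.vMap (Quot.mk (X.AtomRel x₀) ⟨[], ⟨x₀, .nil x₀⟩⟩))
    obtain ⟨y0, hy0⟩ := id βp.2
    have hy0' : y0 = f.toHom.vMap x₀ := by
      have h := pv (Quot.mk (X.AtomRel x₀) ⟨[], ⟨x₀, .nil x₀⟩⟩)
      rw [← hb] at h
      have h2 : X.endFrom x₀ βp.1 = f.toHom.vMap x₀ := h
      rw [hy0.endFrom_eq] at h2
      exact h2
    have hβ : X.IsPath x₀ (f.toHom.vMap x₀) βp.1 := hy0' ▸ hy0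
    have keyE0 : ∀ q : X.BarBase x₀,
        g.toHom.vMap (Quot.mk (X.AtomRel x₀) ⟨q.1.1, ⟨X.s q.1.2, q.2⟩⟩)
          = Quot.mk (X.AtomRel x₀)
              (X.mapPathFrom x₀ f βp.1 hβ ⟨q.1.1, ⟨X.s q.1.2, q.2⟩⟩) →
        g.toHom.eMap (Quot.mk (X.BarRel x₀) q)
          = Quot.mk (X.BarRel x₀) (X.mapBarBase x₀ f βp.1 hβ q) := by
      intro q hq
      refine X.barEdge_ext x₀ _ _ ?_ ?_
      · exact (g.toHom.map_s (Quot.mk (X.BarRel x₀) q)).trans hq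
      · exact pe (Quot.mk (X.BarRel x₀) q)
    have keyV : ∀ (l : List X.E) (hex : ∃ y, X.IsPath x₀ y l),
        g.toHom.vMap (Quot.mk (X.AtomRel x₀) ⟨l, hex⟩)
          = Quot.mk (X.AtomRel x₀) (X.mapPathFrom x₀ f βp.1 hβ ⟨l, hex⟩) := by
      intro l
      induction l using List.reverseRecOn with
      | nil =>
          intro hex
          refine hb.symm.trans (Quot.sound ⟨f.toHom.vMap x₀, ?_⟩)
          show X.Homologous x₀ (f.toHom.vMap x₀) βp.1
            (βp.1 ++ ([] : List X.E).map f.toHom.eMap)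
          simpa using SGraph.Homologous.refl βp.1 hβ
      | append_singleton l' e ih =>
          intro hex
          obtain ⟨y, hy⟩ := id hex
          obtain ⟨h1, h2⟩ := SGraph.isPath_append_single hy
          have hedge := keyE0 ⟨(l', e), h1⟩ (ih ⟨X.s e, h1⟩)
          refine (g.toHom.map_t (Quot.mk (X.BarRel x₀) ⟨(l', e), h1⟩)).symm.trans ?_
          refine (congrArg (X.Bar x₀).t hedge).trans ?_
          show (X.Bar x₀).t
                  (Quot.mk (X.BarRel x₀) (X.mapBarBase x₀ f βp.1 hβ ⟨(l', e), h1⟩))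
              = Quot.mk (X.AtomRel x₀) (X.mapPathFrom x₀ f βp.1 hβ ⟨l' ++ [e], hex⟩)
          · 
                apply congrArg (Quot.mk _)
                apply Subtype.ext
                show (βp.1 ++ l'.map f.toHom.eMap) ++ [f.toHom.eMap e]
                    = βp.1 ++ (l' ++ [e]).map f.toHom.eMap
                simp
    refine ⟨f, βp.1, hβ, fun δ => keyV δ.1 δ.2, fun q => keyE0 q (keyV q.1.1 ⟨X.s q.1.2, q.2⟩)⟩
end

section
/- Let X be a connected graph with basepoint x₀, and let g ∈ Cov(X) correspond to the pair (f, ⟦β⟧) with f ∈ Aut(X) and β: x₀ → f(x₀) a path. Define ρ(g): Z₁(X,ℝ) → Z₁(X,ℝ) by ρ(g)(c) = π(c_β) + f_*(c). Then for every path α: x₀ → x, every edge e with s(e) = x, and every t ∈ [0,1], one has ρ(g)(π(c_α + t·e)) = π(c_{β f(α)} + t·f(e)). In other words, the embedding of the maximal abelian cover into Z₁(X,ℝ) is equivariant with respect to the action of Cov(X). -/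
namespace SGraph

variable {X : SGraph}

theorem chainInner_add_left (c d z : ↥X.C1) :
    X.chainInner (c + d) z = X.chainInner c z + X.chainInner d z := by
  unfold chainInner
  have : ((c + d : ↥X.C1) : X.E →₀ ℝ) = (c : X.E →₀ ℝ) + (d : X.E →₀ ℝ) := rfl
  rw [this, Finsupp.sum_add_index' (h := fun e x => x * (z : X.E →₀ ℝ) e)
    (fun e => zero_mul _) (fun e x y => add_mul x y _)]
  ring

theorem chainInner_sub_left (c d z : ↥X.C1) :
    X.chainInner (c - d) z = X.chainInner c z - X.chainInner d z := by
  unfold chainInner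
  have : ((c - d : ↥X.C1) : X.E →₀ ℝ) = (c : X.E →₀ ℝ) - (d : X.E →₀ ℝ) := rfl
  rw [this, Finsupp.sum_sub_index (h := fun e x => x * (z : X.E →₀ ℝ) e)
    (fun e x y => sub_mul x y _)]
  ring

theorem chainInner_self_eq_zero {c : ↥X.C1} (h : X.chainInner c c = 0) : c = 0 := by
  unfold chainInner at h
  have hsum : ((c : X.E →₀ ℝ).sum fun e x => x * (c : X.E →₀ ℝ) e) = 0 := by linarith
  have hnn : ∀ e ∈ (c : X.E →₀ ℝ).support,
      0 ≤ (c : X.E →₀ ℝ) e * (c : X.E →₀ ℝ) e := fun e _ => mul_self_nonneg _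
  have hzero := (Finset.sum_eq_zero_iff_of_nonneg hnn).mp hsum
  apply Subtype.ext
  ext e
  by_cases he : e ∈ (c : X.E →₀ ℝ).support
  · have := hzero e he
    have := mul_self_eq_zero.mp this
    simpa using this
  · simpa using Finsupp.notMem_support_iff.mp he

/-- Uniqueness of the orthogonal projection. -/
theorem proj_unique {π : ↥X.C1 → ↥X.C1} (hπ : X.IsOrthoProj π) (c z : ↥X.C1)
    (hz : X.IsCycle z) (horth : ∀ w, X.IsCycle w → X.chainInner (c - z) w = 0) :
    π c = z := by
  have hd : X.IsCycle (π c - z) := by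
    have h1 : X.IsCycle (π c) := hπ.1 c
    unfold IsCycle at *
    have heq : π c - z = π c + (-1 : ℝ) • z := by
      have hns : (-1 : ℝ) • z = -z := neg_one_smul ℝ z
      rw [hns]; abel
    rw [heq, X.boundary_add, X.boundary_smul, h1, hz]
    simp
  have hdd : X.chainInner (π c - z) (π c - z) = 0 := by
    have heq : π c - z = (c - z) - (c - π c) := by abel
    nth_rewrite 1 [heq]
    rw [chainInner_sub_left, horth _ hd, hπ.2 c _ hd, sub_zero]
  have := chainInner_self_eq_zero hdd
  exact sub_eq_zero.mp this

theorem proj_add {π : ↥X.C1 → ↥X.C1} (hπ : X.IsOrthoProj π) (a b : ↥X.C1) :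
    π (a + b) = π a + π b := by
  apply proj_unique hπ
  · have h1 := hπ.1 a
    have h2 := hπ.1 b
    unfold IsCycle at *
    rw [X.boundary_add, h1, h2, add_zero]
  · intro w hw
    have heq : a + b - (π a + π b) = (a - π a) + (b - π b) := by abel
    rw [heq, chainInner_add_left, hπ.2 a w hw, hπ.2 b w hw, add_zero]

theorem pushChain_coe (f : X.Aut) (c : ↥X.C1) :
    ((X.pushChain f c : ↥X.C1) : X.E →₀ ℝ)
      = Finsupp.equivMapDomain (X.eEquiv f) (c : X.E →₀ ℝ) := rfl

theorem pushChain_apply (f : X.Aut) (c : ↥X.C1) (e : X.E) :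
    ((X.pushChain f c : ↥X.C1) : X.E →₀ ℝ) e
      = (c : X.E →₀ ℝ) (f.invHom.eMap e) := rfl

theorem pushChain_add (f : X.Aut) (a b : ↥X.C1) :
    X.pushChain f (a + b) = X.pushChain f a + X.pushChain f b := by
  apply Subtype.ext
  ext e
  show ((a + b : ↥X.C1) : X.E →₀ ℝ) (f.invHom.eMap e) = _
  rfl

theorem pushChain_smul (f : X.Aut) (r : ℝ) (a : ↥X.C1) :
    X.pushChain f (r • a) = r • X.pushChain f a := by
  apply Subtype.ext
  ext e
  show ((r • a : ↥X.C1) : X.E →₀ ℝ) (f.invHom.eMap e) = _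
  rfl

theorem pushChain_sub (f : X.Aut) (a b : ↥X.C1) :
    X.pushChain f (a - b) = X.pushChain f a - X.pushChain f b := by
  apply Subtype.ext
  ext e
  show ((a - b : ↥X.C1) : X.E →₀ ℝ) (f.invHom.eMap e) = _
  rfl

theorem pushChain_inv_cancel (f : X.Aut) (c : ↥X.C1) :
    X.pushChain f (X.pushChain f⁻¹ c) = c := by
  apply Subtype.ext
  ext e
  show (c : X.E →₀ ℝ) (f.toHom.eMap (f.invHom.eMap e)) = (c : X.E →₀ ℝ) e
  exact congrArg (c : X.E →₀ ℝ) (congrFun (congrArg Hom.eMap f.right_inv) e)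

theorem chainInner_pushChain (f : X.Aut) (c d : ↥X.C1) :
    X.chainInner (X.pushChain f c) (X.pushChain f d) = X.chainInner c d := by
  unfold chainInner
  rw [pushChain_coe, pushChain_coe, Finsupp.sum_equivMapDomain]
  congr 1
  apply Finsupp.sum_congr
  intro e _
  rw [Finsupp.equivMapDomain_apply, Equiv.symm_apply_apply]

/-- The permutation of vertices induced by an automorphism. -/
def vEquiv (X : SGraph) (f : X.Aut) : X.V ≃ X.V where
  toFun := f.toHom.vMap
  invFun := f.invHom.vMap
  left_inv := fun v => congrFun (congrArg Hom.vMap f.left_inv) v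
  right_inv := fun v => congrFun (congrArg Hom.vMap f.right_inv) v

theorem isCycle_pushChain (f : X.Aut) (c : ↥X.C1) (hc : X.IsCycle c) :
    X.IsCycle (X.pushChain f c) := by
  unfold IsCycle at *
  have key : X.boundary (X.pushChain f c)
      = Finsupp.equivMapDomain (X.vEquiv f) (X.boundary c) := by
    unfold boundary
    rw [pushChain_coe, Finsupp.sum_equivMapDomain]
    have hlin := (Finsupp.domLCongr (M := ℝ) (R := ℝ) (X.vEquiv f)).toLinearMap
    rw [show (Finsupp.equivMapDomain (X.vEquiv f)
        ((c : X.E →₀ ℝ).sum fun e x => x • (Finsupp.single (X.t e) (1:ℝ)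
          - Finsupp.single (X.s e) 1)))
        = (Finsupp.domLCongr (M := ℝ) (R := ℝ) (X.vEquiv f)).toLinearMap
          ((c : X.E →₀ ℝ).sum fun e x => x • (Finsupp.single (X.t e) (1:ℝ)
            - Finsupp.single (X.s e) 1)) from rfl]
    rw [map_finsuppSum]
    apply Finsupp.sum_congr
    intro e _
    rw [map_smul, map_sub]
    have h1 : (Finsupp.domLCongr (M := ℝ) (R := ℝ) (X.vEquiv f)).toLinearMap
        (Finsupp.single (X.t e) (1:ℝ)) = Finsupp.single (X.vEquiv f (X.t e)) 1 := by
      simp [Finsupp.domLCongr_apply]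
    have h2 : (Finsupp.domLCongr (M := ℝ) (R := ℝ) (X.vEquiv f)).toLinearMap
        (Finsupp.single (X.s e) (1:ℝ)) = Finsupp.single (X.vEquiv f (X.s e)) 1 := by
      simp [Finsupp.domLCongr_apply]
    rw [h1, h2]
    have ht' : X.t (X.eEquiv f e) = X.vEquiv f (X.t e) := f.toHom.map_t e
    have hs' : X.s (X.eEquiv f e) = X.vEquiv f (X.s e) := f.toHom.map_s e
    rw [ht', hs']
  rw [key, hc]
  rfl

theorem pushChain_proj {π : ↥X.C1 → ↥X.C1} (hπ : X.IsOrthoProj π) (f : X.Aut)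
    (c : ↥X.C1) : π (X.pushChain f c) = X.pushChain f (π c) := by
  apply proj_unique hπ
  · exact isCycle_pushChain f _ (hπ.1 c)
  · intro w hw
    rw [← pushChain_sub, ← pushChain_inv_cancel f w, chainInner_pushChain]
    exact hπ.2 c _ (isCycle_pushChain f⁻¹ w hw)

theorem pushChain_edgeChain (f : X.Aut) (e : X.E) :
    X.pushChain f (X.edgeChain e) = X.edgeChain (f.toHom.eMap e) := by
  apply Subtype.ext
  ext e'
  rw [pushChain_apply]
  show ((Finsupp.single e 1 - Finsupp.single (X.inv e) 1 : X.E →₀ ℝ)) (f.invHom.eMap e')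
    = ((Finsupp.single (f.toHom.eMap e) 1
        - Finsupp.single (X.inv (f.toHom.eMap e)) 1 : X.E →₀ ℝ)) e'
  have key : ∀ a : X.E, (a = f.invHom.eMap e' ↔ f.toHom.eMap a = e') := by
    intro a
    constructor
    · intro h
      rw [h]
      exact congrFun (congrArg Hom.eMap f.right_inv) e'
    · intro h
      rw [← h]
      exact (congrFun (congrArg Hom.eMap f.left_inv) a).symm
  have hiff1 : e = f.invHom.eMap e' ↔ f.toHom.eMap e = e' := key e
  have hiff2 : X.inv e = f.invHom.eMap e' ↔ X.inv (f.toHom.eMap e) = e' := by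
    rw [f.toHom.map_inv]
    exact key (X.inv e)
  classical
  simp only [Finsupp.sub_apply, Finsupp.single_apply, hiff1, hiff2]

theorem pushChain_zero (f : X.Aut) : X.pushChain f 0 = 0 := by
  apply Subtype.ext
  ext e
  rfl

theorem pushChain_pathChain (f : X.Aut) (γ : List X.E) :
    X.pushChain f (X.pathChain γ) = X.pathChain (γ.map f.toHom.eMap) := by
  induction γ with
  | nil => exact pushChain_zero f
  | cons a γ ih =>
      have h1 : X.pathChain (a :: γ) = X.edgeChain a + X.pathChain γ := by
        unfold pathChain; simp
      have h2 : X.pathChain (f.toHom.eMap a :: γ.map f.toHom.eMap)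
          = X.edgeChain (f.toHom.eMap a) + X.pathChain (γ.map f.toHom.eMap) := by
        unfold pathChain; simp
      rw [List.map_cons, h1, h2, pushChain_add, pushChain_edgeChain, ih]

theorem pathChain_append (γ δ : List X.E) :
    X.pathChain (γ ++ δ) = X.pathChain γ + X.pathChain δ := by
  unfold pathChain
  rw [List.map_append, List.sum_append]

end SGraph

/-- equivariance of the embedding of the maximal abelian cover.
Let `g ∈ Cov(X)` correspond to the pair `(f, ⟦β⟧)`, and define
`ρ(g)(c) = π(c_β) + f_*(c)`.  Then for every path `α : x₀ → x`, every edge `e` with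
`s(e) = x` and every `t ∈ [0,1]` we have
`ρ(g)(π(c_α + t·e)) = π(c_{β f(α)} + t·f(e))`. -/
theorem embedding_equivariant (X : SGraph) (hconn : X.Connected) (x₀ : X.V)
    (π : ↥X.C1 → ↥X.C1) (hπ : X.IsOrthoProj π)
    (g : ↥(X.Cov x₀)) (f : X.Aut) (β : List X.E) (hg : X.ActsAs x₀ g.1 f β)
    (x : X.V) (α : List X.E) (hα : X.IsPath x₀ x α) (e : X.E) (he : X.s e = x)
    (t : ℝ) (ht : t ∈ Set.Icc (0:ℝ) 1) :
    π (X.pathChain β) + X.pushChain f (π (X.pathChain α + t • X.edgeChain e)) =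
      π (X.pathChain (β ++ α.map f.toHom.eMap) + t • X.edgeChain (f.toHom.eMap e)) := by
  rw [← SGraph.pushChain_proj hπ f, ← SGraph.proj_add hπ]
  congr 1
  rw [SGraph.pushChain_add, SGraph.pushChain_smul, SGraph.pushChain_pathChain,
    SGraph.pushChain_edgeChain, SGraph.pathChain_append]
  abel
end
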